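/- For every integer p ≥ 2, the XOR gadget of order p has exactly two subtours, namely: T_a, whose edge set consists of all 2p edges a_i u_i and u_i b_i (1 ≤ i ≤ p) together with the edges a_i a_{i+1} for all odd i with 1 ≤ i ≤ p−1 and the edges b_i b_{i+1} for all even i with 1 ≤ i ≤ p−1; and T_b, whose edge set consists of all 2p edges a_i u_i and u_i b_i together with the edges a_i a_{i+1} for all even i with 1 ≤ i ≤ p−1 and the edges b_i b_{i+1} for all odd i with 1 ≤ i ≤ p−1. For p = 1, the XOR gadget of order 1 has exactly one subtour, namely the path (a_1, u_1, b_1). -/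

import Mathlib

open SimpleGraph

noncomputable section

/-- The degree of a vertex `v` in a simple graph `G` (as a set cardinality). -/
def gdeg {V : Type*} (G : SimpleGraph V) (v : V) : ℕ := {u | G.Adj v u}.ncard

/-- The vertex type of the XOR gadget of order `p`: `(0, i)` is `aᵢ₊₁`, `(1, i)` is `bᵢ₊₁`,
and `(2, i)` is `uᵢ₊₁` (0-based indices). -/
abbrev XV (p : ℕ) := Fin 3 × Fin p

def av {p : ℕ} (i : Fin p) : XV p := ((0 : Fin 3), i)
def bv {p : ℕ} (i : Fin p) : XV p := ((1 : Fin 3), i)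
def uvx {p : ℕ} (i : Fin p) : XV p := ((2 : Fin 3), i)

/-- The edges of the XOR gadget of order `p`: the rail edges `aᵢaᵢ₊₁`, `bᵢbᵢ₊₁`, and the
subdivided rungs `aᵢuᵢ`, `uᵢbᵢ`. -/
def xorEdges (p : ℕ) : Set (Sym2 (XV p)) :=
  {e | (∃ i j : Fin p, (j : ℕ) = (i : ℕ) + 1 ∧ (e = s(av i, av j) ∨ e = s(bv i, bv j))) ∨
       (∃ i : Fin p, e = s(av i, uvx i) ∨ e = s(bv i, uvx i))}

/-- The XOR gadget of order `p`. -/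
def xorGadget (p : ℕ) : SimpleGraph (XV p) := SimpleGraph.fromEdgeSet (xorEdges p)

/-- The set `{a₁, a_p, b₁, b_p}` of allowed endpoints. -/
def xorEnds (p : ℕ) : Set (XV p) :=
  {v | (v.1 = 0 ∨ v.1 = 1) ∧ ((v.2 : ℕ) = 0 ∨ (v.2 : ℕ) = p - 1)}

/-- A subtour of the XOR gadget of order `p`: a Hamiltonian path (connected, acyclic,
all degrees 1 or 2) whose endpoints (the degree-one vertices) lie in `{a₁, a_p, b₁, b_p}`,
given by its edge set `T`. -/
def IsXorSubtour (p : ℕ) (T : Set (Sym2 (XV p))) : Prop :=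
  T ⊆ (xorGadget p).edgeSet ∧
  (SimpleGraph.fromEdgeSet T).Connected ∧
  (SimpleGraph.fromEdgeSet T).IsAcyclic ∧
  (∀ v : XV p, gdeg (SimpleGraph.fromEdgeSet T) v = 1 ∨
      gdeg (SimpleGraph.fromEdgeSet T) v = 2) ∧
  (∀ v : XV p, gdeg (SimpleGraph.fromEdgeSet T) v = 1 → v ∈ xorEnds p)

/-- The subtour `T_a`: all rungs, together with `aᵢaᵢ₊₁` for odd `i` (1-based, i.e. even
0-based index) and `bᵢbᵢ₊₁` for even `i` (1-based, i.e. odd 0-based index). -/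
def Ta (p : ℕ) : Set (Sym2 (XV p)) :=
  {e | (∃ i : Fin p, e = s(av i, uvx i) ∨ e = s(bv i, uvx i)) ∨
       (∃ i j : Fin p, (j : ℕ) = (i : ℕ) + 1 ∧
          (((i : ℕ) % 2 = 0 ∧ e = s(av i, av j)) ∨ ((i : ℕ) % 2 = 1 ∧ e = s(bv i, bv j))))}

/-- The subtour `T_b`: all rungs, together with `aᵢaᵢ₊₁` for even `i` (1-based) and
`bᵢbᵢ₊₁` for odd `i` (1-based). -/
def Tb (p : ℕ) : Set (Sym2 (XV p)) :=
  {e | (∃ i : Fin p, e = s(av i, uvx i) ∨ e = s(bv i, uvx i)) ∨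
       (∃ i j : Fin p, (j : ℕ) = (i : ℕ) + 1 ∧
          (((i : ℕ) % 2 = 1 ∧ e = s(av i, av j)) ∨ ((i : ℕ) % 2 = 0 ∧ e = s(bv i, bv j))))}

variable {p : ℕ}

def Tgen (c p : ℕ) : Set (Sym2 (XV p)) :=
  {e | (∃ i : Fin p, e = s(av i, uvx i) ∨ e = s(bv i, uvx i)) ∨
       (∃ i j : Fin p, (j : ℕ) = (i : ℕ) + 1 ∧
          (((i : ℕ) % 2 = c ∧ e = s(av i, av j)) ∨ ((i : ℕ) % 2 = 1 - c ∧ e = s(bv i, bv j))))}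

lemma Tgen_zero (p : ℕ) : Tgen 0 p = Ta p := rfl
lemma Tgen_one (p : ℕ) : Tgen 1 p = Tb p := rfl

variable {p : ℕ}

@[simp] lemma av_eq_av_iff {i j : Fin p} : av i = av j ↔ i = j := by
  simp [av, Prod.ext_iff]
@[simp] lemma bv_eq_bv_iff {i j : Fin p} : bv i = bv j ↔ i = j := by
  simp [bv, Prod.ext_iff]
@[simp] lemma uvx_eq_uvx_iff {i j : Fin p} : uvx i = uvx j ↔ i = j := by
  simp [uvx, Prod.ext_iff]
@[simp] lemma av_ne_bv {i j : Fin p} : av i ≠ bv j := by simp [av, bv, Prod.ext_iff]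
@[simp] lemma av_ne_uvx {i j : Fin p} : av i ≠ uvx j := by simp [av, uvx, Prod.ext_iff]
@[simp] lemma bv_ne_uvx {i j : Fin p} : bv i ≠ uvx j := by simp [bv, uvx, Prod.ext_iff]
@[simp] lemma bv_ne_av {i j : Fin p} : bv i ≠ av j := fun h => av_ne_bv h.symm
@[simp] lemma uvx_ne_av {i j : Fin p} : uvx i ≠ av j := fun h => av_ne_uvx h.symm
@[simp] lemma uvx_ne_bv {i j : Fin p} : uvx i ≠ bv j := fun h => bv_ne_uvx h.symm

lemma walk_boundary {V : Type*} {G : SimpleGraph V} {S : Set V} :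
    ∀ {v w : V}, G.Walk v w → v ∈ S → w ∉ S → ∃ x y, G.Adj x y ∧ x ∈ S ∧ y ∉ S := by
  intro v w walk
  induction walk with
  | nil => intro h h'; exact absurd h h'
  | @cons a b c h q ih =>
    intro hv hw
    by_cases hm : b ∈ S
    · exact ih hm hw
    · exact ⟨a, b, h, hv, hm⟩

def posf (c : ℕ) {p : ℕ} (v : XV p) : ℕ :=
  3 * (v.2 : ℕ) +
    (if v.1 = (2 : Fin 3) then 1
     else if ((v.1 = (0 : Fin 3)) ↔ ((v.2 : ℕ) % 2 = c)) then 2 else 0)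

lemma posf_a (c : ℕ) (i : Fin p) :
    posf c (av i) = 3 * (i : ℕ) + (if (i : ℕ) % 2 = c then 2 else 0) := by
  simp [posf, av]
lemma posf_b (c : ℕ) (i : Fin p) :
    posf c (bv i) = 3 * (i : ℕ) + (if (i : ℕ) % 2 = c then 0 else 2) := by
  by_cases h : (i : ℕ) % 2 = c <;> simp [posf, bv, h]
lemma posf_u (c : ℕ) (i : Fin p) : posf c (uvx i) = 3 * (i : ℕ) + 1 := by
  simp [posf, uvx]

lemma posf_lt (c : ℕ) (v : XV p) : posf c v < 3 * p := by
  obtain ⟨t, i⟩ := v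
  have := i.isLt
  unfold posf
  split_ifs <;> simp <;> omega

lemma posf_inj {c : ℕ} : Function.Injective (posf c (p := p)) := by
  rintro ⟨t1, i1⟩ ⟨t2, i2⟩ h
  fin_cases t1 <;> fin_cases t2 <;>
    simp [posf] at h <;>
    (try split_ifs at h) <;>
    simp_all [Prod.ext_iff, Fin.ext_iff] <;>
    omega

lemma posf_surj {c : ℕ} (hc : c < 2) {k : ℕ} (hk : k < 3 * p) :
    ∃ v : XV p, posf c v = k := by
  have h3 : k % 3 < 3 := Nat.mod_lt _ (by norm_num)
  have hi : k / 3 < p := by omega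
  set i : Fin p := ⟨k / 3, hi⟩ with hidef
  have hiv : (i : ℕ) = k / 3 := rfl
  rcases (show k % 3 = 0 ∨ k % 3 = 1 ∨ k % 3 = 2 by omega) with h | h | h
  · by_cases hm : (i : ℕ) % 2 = c
    · exact ⟨bv i, by rw [posf_b, if_pos hm]; omega⟩
    · exact ⟨av i, by rw [posf_a, if_neg hm]; omega⟩
  · exact ⟨uvx i, by rw [posf_u]; omega⟩
  · by_cases hm : (i : ℕ) % 2 = c
    · exact ⟨av i, by rw [posf_a, if_pos hm]; omega⟩
    · exact ⟨bv i, by rw [posf_b, if_neg hm]; omega⟩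

lemma mem_rung_a (c : ℕ) (i : Fin p) : s(av i, uvx i) ∈ Tgen c p := Or.inl ⟨i, Or.inl rfl⟩
lemma mem_rung_b (c : ℕ) (i : Fin p) : s(bv i, uvx i) ∈ Tgen c p := Or.inl ⟨i, Or.inr rfl⟩

lemma adj_tgen {c : ℕ} {v w : XV p} :
    (fromEdgeSet (Tgen c p)).Adj v w ↔ s(v, w) ∈ Tgen c p ∧ v ≠ w := fromEdgeSet_adj _

lemma posf_adj {c : ℕ} (hc : c < 2) {v w : XV p}
    (h : (fromEdgeSet (Tgen c p)).Adj v w) :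
    posf c w + 1 = posf c v ∨ posf c v + 1 = posf c w := by
  rw [adj_tgen] at h
  obtain ⟨hm, -⟩ := h
  rcases hm with ⟨i, he | he⟩ | ⟨i, j, hij, ⟨hpar, he⟩ | ⟨hpar, he⟩⟩ <;>
    rw [Sym2.eq_iff] at he <;>
    rcases he with ⟨rfl, rfl⟩ | ⟨rfl, rfl⟩ <;>
    simp only [posf_a, posf_b, posf_u] <;>
    split_ifs <;> omega


lemma xv_cases (v : XV p) : ∃ i, v = av i ∨ v = bv i ∨ v = uvx i := by
  obtain ⟨t, i⟩ := v
  refine ⟨i, ?_⟩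
  fin_cases t
  · exact Or.inl rfl
  · exact Or.inr (Or.inl rfl)
  · exact Or.inr (Or.inr rfl)

lemma posf_pred {c : ℕ} (hc : c < 2) {v : XV p} (hv : 0 < posf c v) :
    ∃ w, (fromEdgeSet (Tgen c p)).Adj v w ∧ posf c w + 1 = posf c v := by
  obtain ⟨i, rfl | rfl | rfl⟩ := xv_cases v
  · -- a_i
    by_cases hm : (i : ℕ) % 2 = c
    · exact ⟨uvx i, adj_tgen.mpr ⟨mem_rung_a c i, av_ne_uvx⟩, by
        rw [posf_u, posf_a, if_pos hm]⟩
    · have hi0 : 0 < (i : ℕ) := by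
        rw [posf_a, if_neg hm] at hv; omega
      refine ⟨av ⟨(i : ℕ) - 1, by omega⟩, adj_tgen.mpr ⟨?_, ?_⟩, ?_⟩
      · exact Or.inr ⟨⟨(i : ℕ) - 1, by omega⟩, i, by simp; omega,
          Or.inl ⟨by simp; omega, Sym2.eq_swap⟩⟩
      · simp [Fin.ext_iff]; omega
      · rw [posf_a, posf_a, if_neg hm, if_pos (by simp; omega)]; simp; omega
  · -- b_i
    by_cases hm : (i : ℕ) % 2 = c
    · have hi0 : 0 < (i : ℕ) := by
        rw [posf_b, if_pos hm] at hv; omega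
      refine ⟨bv ⟨(i : ℕ) - 1, by omega⟩, adj_tgen.mpr ⟨?_, ?_⟩, ?_⟩
      · exact Or.inr ⟨⟨(i : ℕ) - 1, by omega⟩, i, by simp; omega,
          Or.inr ⟨by simp; omega, Sym2.eq_swap⟩⟩
      · simp [Fin.ext_iff]; omega
      · rw [posf_b, posf_b, if_pos hm, if_neg (by simp; omega)]; simp; omega
    · exact ⟨uvx i, adj_tgen.mpr ⟨mem_rung_b c i, bv_ne_uvx⟩, by
        rw [posf_u, posf_b, if_neg hm]⟩
  · -- u_i
    by_cases hm : (i : ℕ) % 2 = c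
    · exact ⟨bv i, adj_tgen.mpr ⟨Sym2.eq_swap ▸ mem_rung_b c i, uvx_ne_bv⟩, by
        rw [posf_u, posf_b, if_pos hm]⟩
    · exact ⟨av i, adj_tgen.mpr ⟨Sym2.eq_swap ▸ mem_rung_a c i, uvx_ne_av⟩, by
        rw [posf_u, posf_a, if_neg hm]⟩

lemma tgen_connected {c : ℕ} (hc : c < 2) (hp : 0 < p) :
    (fromEdgeSet (Tgen c p)).Connected := by
  have hne : Nonempty (XV p) := ⟨((0 : Fin 3), ⟨0, hp⟩)⟩
  rw [connected_iff]
  refine ⟨?_, hne⟩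
  obtain ⟨v0, hv0⟩ := posf_surj (p := p) hc (k := 0) (by omega)
  have key : ∀ n (v : XV p), posf c v = n → (fromEdgeSet (Tgen c p)).Reachable v v0 := by
    intro n
    induction n with
    | zero =>
      intro v hv
      have : v = v0 := posf_inj (c := c) (hv.trans hv0.symm)
      rw [this]
    | succ n ih =>
      intro v hv
      obtain ⟨w, hadj, hw⟩ := posf_pred hc (v := v) (by omega)
      exact hadj.reachable.trans (ih w (by omega))
  intro u v
  exact (key _ u rfl).trans (key _ v rfl).symm

lemma tgen_acyclic {c : ℕ} (hc : c < 2) : (fromEdgeSet (Tgen c p)).IsAcyclic := by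
  rw [isAcyclic_iff_forall_adj_isBridge]
  suffices H : ∀ v w : XV p, (fromEdgeSet (Tgen c p)).Adj v w →
      posf c v + 1 = posf c w → (fromEdgeSet (Tgen c p)).IsBridge s(v, w) by
    intro v w hadj
    rcases posf_adj hc hadj with h | h
    · have := H w v hadj.symm h
      rwa [Sym2.eq_swap] at this
    · exact H v w hadj h
  intro v w hadj hpos
  rw [isBridge_iff]
  rintro ⟨walk⟩
  obtain ⟨x, y, hxy, hx, hy⟩ := walk_boundary (S := {x : XV p | posf c x ≤ posf c v}) walk
    (by simp) (by simp; omega)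
  rw [deleteEdges_adj] at hxy
  obtain ⟨hxy1, hxy2⟩ := hxy
  simp only [Set.mem_setOf_eq, not_le] at hx hy
  rcases posf_adj hc hxy1 with h | h
  · omega
  · have hxv : x = v := posf_inj (c := c) (by omega)
    have hyw : y = w := posf_inj (c := c) (by omega)
    subst hxv; subst hyw
    exact hxy2 rfl

lemma tgen_deg_le {c : ℕ} (hc : c < 2) (v : XV p) :
    {u | (fromEdgeSet (Tgen c p)).Adj v u}.ncard ≤ 2 := by
  have h1 : {u | (fromEdgeSet (Tgen c p)).Adj v u}.ncard ≤
      ({posf c v + 1, posf c v - 1} : Set ℕ).ncard := by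
    refine Set.ncard_le_ncard_of_injOn (posf c) ?_ (posf_inj.injOn) (Set.toFinite _)
    intro u hu
    rcases posf_adj hc hu with h | h <;> simp <;> omega
  refine h1.trans ?_
  refine le_trans (Set.ncard_insert_le _ _) ?_
  simp

lemma tgen_rung_nbr {c : ℕ} (v : XV p) : ∃ u, (fromEdgeSet (Tgen c p)).Adj v u := by
  obtain ⟨i, rfl | rfl | rfl⟩ := xv_cases v
  · exact ⟨uvx i, adj_tgen.mpr ⟨mem_rung_a c i, av_ne_uvx⟩⟩
  · exact ⟨uvx i, adj_tgen.mpr ⟨mem_rung_b c i, bv_ne_uvx⟩⟩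
  · exact ⟨av i, adj_tgen.mpr ⟨Sym2.eq_swap ▸ mem_rung_a c i, uvx_ne_av⟩⟩

lemma tgen_deg12 {c : ℕ} (hc : c < 2) (v : XV p) :
    gdeg (fromEdgeSet (Tgen c p)) v = 1 ∨ gdeg (fromEdgeSet (Tgen c p)) v = 2 := by
  have h2 := tgen_deg_le hc v
  have h1 : 0 < {u | (fromEdgeSet (Tgen c p)).Adj v u}.ncard := by
    rw [Set.ncard_pos (Set.toFinite _)]
    obtain ⟨u, hu⟩ := tgen_rung_nbr v
    exact ⟨u, hu⟩
  unfold gdeg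
  omega

lemma tgen_interior {c : ℕ} (hc : c < 2) {v : XV p} (hv : v ∉ xorEnds p) :
    0 < posf c v ∧ posf c v + 1 < 3 * p := by
  obtain ⟨i, rfl | rfl | rfl⟩ := xv_cases v <;> have := i.isLt
  · have h2 : ¬((i : ℕ) = 0 ∨ (i : ℕ) = p - 1) := fun h => hv ⟨Or.inl rfl, h⟩
    rw [posf_a]; split_ifs <;> omega
  · have h2 : ¬((i : ℕ) = 0 ∨ (i : ℕ) = p - 1) := fun h => hv ⟨Or.inr rfl, h⟩
    rw [posf_b]; split_ifs <;> omega
  · rw [posf_u]; omega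

lemma tgen_deg2 {c : ℕ} (hc : c < 2) {v : XV p} (hv : v ∉ xorEnds p) :
    gdeg (fromEdgeSet (Tgen c p)) v = 2 := by
  obtain ⟨h0, h3⟩ := tgen_interior hc hv
  obtain ⟨w1, hw1, hw1p⟩ := posf_pred hc h0
  obtain ⟨w, hw⟩ := posf_surj hc (k := posf c v + 1) h3
  obtain ⟨x, hx, hxp⟩ := posf_pred hc (v := w) (by omega)
  have hxv : x = v := posf_inj (c := c) (by omega)
  rw [hxv] at hx
  have hsub : ({w1, w} : Set (XV p)) ⊆ {u | (fromEdgeSet (Tgen c p)).Adj v u} := by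
    rintro z (rfl | rfl)
    · exact hw1
    · exact hx.symm
  have hne : w1 ≠ w := fun h => by rw [h] at hw1p; omega
  have h2 : 2 ≤ {u | (fromEdgeSet (Tgen c p)).Adj v u}.ncard := by
    rw [← Set.ncard_pair hne]
    exact Set.ncard_le_ncard hsub (Set.toFinite _)
  have hle := tgen_deg_le hc v
  unfold gdeg
  omega


lemma tgen_subset {c : ℕ} : Tgen c p ⊆ (xorGadget p).edgeSet := by
  rw [xorGadget, edgeSet_fromEdgeSet]
  rintro e (⟨i, rfl | rfl⟩ | ⟨i, j, hij, ⟨hpar, rfl⟩ | ⟨hpar, rfl⟩⟩) <;>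
    refine Set.mem_diff_of_mem ?_ ?_
  · exact Or.inr ⟨i, Or.inl rfl⟩
  · simp [Sym2.isDiag_iff_proj_eq]
  · exact Or.inr ⟨i, Or.inr rfl⟩
  · simp [Sym2.isDiag_iff_proj_eq]
  · exact Or.inl ⟨i, j, hij, Or.inl rfl⟩
  · simp [Sym2.isDiag_iff_proj_eq, Fin.ext_iff]; omega
  · exact Or.inl ⟨i, j, hij, Or.inr rfl⟩
  · simp [Sym2.isDiag_iff_proj_eq, Fin.ext_iff]; omega

lemma tgen_subtour {c : ℕ} (hc : c < 2) (hp : 0 < p) : IsXorSubtour p (Tgen c p) := by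
  refine ⟨tgen_subset, tgen_connected hc hp, tgen_acyclic hc, tgen_deg12 hc, ?_⟩
  intro v hdeg
  by_contra hv
  rw [tgen_deg2 hc hv] at hdeg
  omega

variable {T : Set (Sym2 (XV p))}

lemma le_gadget (hT : T ⊆ (xorGadget p).edgeSet) : fromEdgeSet T ≤ xorGadget p := by
  have := fromEdgeSet_mono hT
  rwa [fromEdgeSet_edgeSet] at this

lemma gadget_adj_decode {v w : XV p} (h : (xorGadget p).Adj v w) :
    (∃ i j : Fin p, (j : ℕ) = (i : ℕ) + 1 ∧
      ((v = av i ∧ w = av j) ∨ (v = av j ∧ w = av i) ∨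
       (v = bv i ∧ w = bv j) ∨ (v = bv j ∧ w = bv i))) ∨
    (∃ i : Fin p, (v = av i ∧ w = uvx i) ∨ (w = av i ∧ v = uvx i) ∨
       (v = bv i ∧ w = uvx i) ∨ (w = bv i ∧ v = uvx i)) := by
  rw [xorGadget, fromEdgeSet_adj] at h
  obtain ⟨hm, hne⟩ := h
  rcases hm with ⟨i, j, hij, he | he⟩ | ⟨i, he | he⟩ <;> rw [Sym2.eq_iff] at he
  · exact Or.inl ⟨i, j, hij, by tauto⟩
  · exact Or.inl ⟨i, j, hij, by tauto⟩
  · exact Or.inr ⟨i, by tauto⟩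
  · exact Or.inr ⟨i, by tauto⟩

lemma uvx_not_end (i : Fin p) : uvx i ∉ xorEnds p := by
  intro h
  rcases h.1 with h1 | h1 <;> simp [uvx] at h1

lemma rungs_mem (hsub : IsXorSubtour p T) (i : Fin p) :
    s(av i, uvx i) ∈ T ∧ s(bv i, uvx i) ∈ T := by
  obtain ⟨hT, -, -, hdeg, hends⟩ := hsub
  have hNsub : {w | (fromEdgeSet T).Adj (uvx i) w} ⊆ {av i, bv i} := by
    intro w hw
    have hG := le_gadget hT hw
    rcases gadget_adj_decode hG with ⟨i', j', hij, hc⟩ | ⟨i', hc⟩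
    · rcases hc with ⟨h1, -⟩ | ⟨h1, -⟩ | ⟨h1, -⟩ | ⟨h1, -⟩ <;> exact absurd h1 (by simp)
    · rcases hc with ⟨h1, -⟩ | ⟨h1, h2⟩ | ⟨h1, -⟩ | ⟨h1, h2⟩
      · exact absurd h1 (by simp)
      · have : i' = i := by simpa using h2.symm
        subst this
        exact Or.inl h1
      · exact absurd h1 (by simp)
      · have : i' = i := by simpa using h2.symm
        subst this
        exact Or.inr h1
  have hd2 : gdeg (fromEdgeSet T) (uvx i) = 2 := by
    rcases hdeg (uvx i) with h | h
    · exact absurd (hends _ h) (uvx_not_end i)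
    · exact h
  have hNeq : {w | (fromEdgeSet T).Adj (uvx i) w} = {av i, bv i} := by
    refine Set.eq_of_subset_of_ncard_le hNsub ?_ (Set.toFinite _)
    rw [Set.ncard_pair (av_ne_bv (i := i) (j := i))]
    exact le_of_eq hd2.symm
  have ha : (fromEdgeSet T).Adj (uvx i) (av i) := by
    have : av i ∈ {w | (fromEdgeSet T).Adj (uvx i) w} := by rw [hNeq]; simp
    exact this
  have hb : (fromEdgeSet T).Adj (uvx i) (bv i) := by
    have : bv i ∈ {w | (fromEdgeSet T).Adj (uvx i) w} := by rw [hNeq]; simp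
    exact this
  constructor
  · have := ((fromEdgeSet_adj T).mp ha).1
    rwa [Sym2.eq_swap] at this
  · have := ((fromEdgeSet_adj T).mp hb).1
    rwa [Sym2.eq_swap] at this

lemma rail_exists (hsub : IsXorSubtour p T) {i j : Fin p} (hij : (j : ℕ) = (i : ℕ) + 1) :
    s(av i, av j) ∈ T ∨ s(bv i, bv j) ∈ T := by
  obtain ⟨hT, hconn, -, -, -⟩ := hsub
  obtain ⟨walk⟩ := hconn.preconnected (av i) (av j)
  obtain ⟨x, y, hxy, hx, hy⟩ := walk_boundary (S := {v : XV p | (v.2 : ℕ) ≤ (i : ℕ)}) walk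
    (by simp [av]) (by simp [av]; omega)
  have hmem : s(x, y) ∈ T := ((fromEdgeSet_adj T).mp hxy).1
  have hG := le_gadget hT hxy
  simp only [Set.mem_setOf_eq, not_le] at hx hy
  rcases gadget_adj_decode hG with ⟨i', j', hij', hc⟩ | ⟨i', hc⟩
  · rcases hc with ⟨rfl, rfl⟩ | ⟨rfl, rfl⟩ | ⟨rfl, rfl⟩ | ⟨rfl, rfl⟩ <;>
      simp only [av, bv] at hx hy
    · have hi : i' = i := Fin.ext (by omega)
      have hj : j' = j := Fin.ext (by omega)
      subst hi; subst hj
      exact Or.inl hmem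
    · omega
    · have hi : i' = i := Fin.ext (by omega)
      have hj : j' = j := Fin.ext (by omega)
      subst hi; subst hj
      exact Or.inr hmem
    · omega
  · rcases hc with ⟨rfl, rfl⟩ | ⟨rfl, rfl⟩ | ⟨rfl, rfl⟩ | ⟨rfl, rfl⟩ <;>
      simp only [av, bv, uvx] at hx hy <;> omega

lemma rail_unique (hsub : IsXorSubtour p T) {i j : Fin p} (hij : (j : ℕ) = (i : ℕ) + 1) :
    ¬(s(av i, av j) ∈ T ∧ s(bv i, bv j) ∈ T) := by
  rintro ⟨ha, hb⟩
  have hr := rungs_mem hsub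
  obtain ⟨hT, -, hacyc, -, -⟩ := hsub
  have hne_ij : av (p := p) i ≠ av j := by simp [Fin.ext_iff]; omega
  have hadj : (fromEdgeSet T).Adj (av i) (av j) := (fromEdgeSet_adj T).mpr ⟨ha, hne_ij⟩
  have hbr := isAcyclic_iff_forall_adj_isBridge.mp hacyc hadj
  rw [isBridge_iff] at hbr
  refine hbr ?_
  have hAdj : ∀ x y : XV p, s(x, y) ∈ T → x ≠ y → s(x, y) ≠ s(av i, av j) →
      ((fromEdgeSet T) \ fromEdgeSet {s(av i, av j)}).Adj x y := by
    intro x y h1 h2 h3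
    rw [sdiff_adj]
    exact ⟨(fromEdgeSet_adj T).mpr ⟨h1, h2⟩,
      fun hadj' => h3 ((fromEdgeSet_adj _).mp hadj').1⟩
  have e1 := hAdj (av i) (uvx i) (hr i).1 av_ne_uvx (by simp [Sym2.eq_iff])
  have e2 := hAdj (uvx i) (bv i) (Sym2.eq_swap ▸ (hr i).2) uvx_ne_bv (by simp [Sym2.eq_iff])
  have e3 := hAdj (bv i) (bv j) hb (by simp [Fin.ext_iff]; omega) (by simp [Sym2.eq_iff])
  have e4 := hAdj (bv j) (uvx j) (hr j).2 bv_ne_uvx (by simp [Sym2.eq_iff])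
  have e5 := hAdj (uvx j) (av j) (Sym2.eq_swap ▸ (hr j).1) uvx_ne_av (by simp [Sym2.eq_iff])
  exact ⟨Walk.cons e1 (Walk.cons e2 (Walk.cons e3 (Walk.cons e4 (Walk.cons e5 Walk.nil))))⟩

lemma no_consec_a (hsub : IsXorSubtour p T) {i j k : Fin p}
    (hij : (j : ℕ) = (i : ℕ) + 1) (hjk : (k : ℕ) = (j : ℕ) + 1)
    (h1 : s(av i, av j) ∈ T) (h2 : s(av j, av k) ∈ T) : False := by
  have hr := (rungs_mem hsub j).1
  obtain ⟨hT, -, -, hdeg, -⟩ := hsub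
  have hadj1 : (fromEdgeSet T).Adj (av j) (av i) :=
    (fromEdgeSet_adj T).mpr ⟨Sym2.eq_swap ▸ h1, by simp [Fin.ext_iff]; omega⟩
  have hadj2 : (fromEdgeSet T).Adj (av j) (av k) :=
    (fromEdgeSet_adj T).mpr ⟨h2, by simp [Fin.ext_iff]; omega⟩
  have hadj3 : (fromEdgeSet T).Adj (av j) (uvx j) :=
    (fromEdgeSet_adj T).mpr ⟨hr, av_ne_uvx⟩
  have hsub3 : ({av i, av k, uvx j} : Set (XV p)) ⊆ {u | (fromEdgeSet T).Adj (av j) u} := by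
    rintro z (rfl | rfl | rfl)
    · exact hadj1
    · exact hadj2
    · exact hadj3
  have hcard : ({av i, av k, uvx j} : Set (XV p)).ncard = 3 := by
    rw [Set.ncard_insert_of_notMem (by simp [Fin.ext_iff]; omega),
      Set.ncard_insert_of_notMem (by simp), Set.ncard_singleton]
  have hle := Set.ncard_le_ncard hsub3 (Set.toFinite _)
  rcases hdeg (av j) with h | h <;> unfold gdeg at h <;> omega

lemma no_consec_b (hsub : IsXorSubtour p T) {i j k : Fin p}
    (hij : (j : ℕ) = (i : ℕ) + 1) (hjk : (k : ℕ) = (j : ℕ) + 1)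
    (h1 : s(bv i, bv j) ∈ T) (h2 : s(bv j, bv k) ∈ T) : False := by
  have hr := (rungs_mem hsub j).2
  obtain ⟨hT, -, -, hdeg, -⟩ := hsub
  have hadj1 : (fromEdgeSet T).Adj (bv j) (bv i) :=
    (fromEdgeSet_adj T).mpr ⟨Sym2.eq_swap ▸ h1, by simp [Fin.ext_iff]; omega⟩
  have hadj2 : (fromEdgeSet T).Adj (bv j) (bv k) :=
    (fromEdgeSet_adj T).mpr ⟨h2, by simp [Fin.ext_iff]; omega⟩
  have hadj3 : (fromEdgeSet T).Adj (bv j) (uvx j) :=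
    (fromEdgeSet_adj T).mpr ⟨hr, bv_ne_uvx⟩
  have hsub3 : ({bv i, bv k, uvx j} : Set (XV p)) ⊆ {u | (fromEdgeSet T).Adj (bv j) u} := by
    rintro z (rfl | rfl | rfl)
    · exact hadj1
    · exact hadj2
    · exact hadj3
  have hcard : ({bv i, bv k, uvx j} : Set (XV p)).ncard = 3 := by
    rw [Set.ncard_insert_of_notMem (by simp [Fin.ext_iff]; omega),
      Set.ncard_insert_of_notMem (by simp), Set.ncard_singleton]
  have hle := Set.ncard_le_ncard hsub3 (Set.toFinite _)
  rcases hdeg (bv j) with h | h <;> unfold gdeg at h <;> omega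

lemma subtour_eq_tgen (hp : 2 ≤ p) (hsub : IsXorSubtour p T) :
    T = Tgen 0 p ∨ T = Tgen 1 p := by
  classical
  set A : ℕ → Prop :=
    fun n => ∃ i j : Fin p, (i : ℕ) = n ∧ (j : ℕ) = n + 1 ∧ s(av i, av j) ∈ T with hAdef
  set B : ℕ → Prop :=
    fun n => ∃ i j : Fin p, (i : ℕ) = n ∧ (j : ℕ) = n + 1 ∧ s(bv i, bv j) ∈ T with hBdef
  have hA_mem : ∀ {i j : Fin p}, (j : ℕ) = (i : ℕ) + 1 →
      (A (i : ℕ) ↔ s(av i, av j) ∈ T) := by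
    intro i j hij
    constructor
    · rintro ⟨i', j', hi', hj', hm⟩
      have h1 : i' = i := Fin.ext hi'
      have h2 : j' = j := Fin.ext (by omega)
      subst h1; subst h2; exact hm
    · intro hm; exact ⟨i, j, rfl, by omega, hm⟩
  have hB_mem : ∀ {i j : Fin p}, (j : ℕ) = (i : ℕ) + 1 →
      (B (i : ℕ) ↔ s(bv i, bv j) ∈ T) := by
    intro i j hij
    constructor
    · rintro ⟨i', j', hi', hj', hm⟩
      have h1 : i' = i := Fin.ext hi'
      have h2 : j' = j := Fin.ext (by omega)
      subst h1; subst h2; exact hm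
    · intro hm; exact ⟨i, j, rfl, by omega, hm⟩
  have hor : ∀ n, n + 1 < p → A n ∨ B n := by
    intro n hn
    rcases rail_exists hsub (i := ⟨n, by omega⟩) (j := ⟨n + 1, hn⟩) rfl with h | h
    · exact Or.inl ⟨_, _, rfl, rfl, h⟩
    · exact Or.inr ⟨_, _, rfl, rfl, h⟩
  have hnand : ∀ n, n + 1 < p → ¬(A n ∧ B n) := by
    rintro n hn ⟨hA, hB⟩
    refine rail_unique hsub (i := ⟨n, by omega⟩) (j := ⟨n + 1, hn⟩) rfl ⟨?_, ?_⟩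
    · exact (hA_mem (i := ⟨n, by omega⟩) (j := ⟨n + 1, hn⟩) rfl).mp hA
    · exact (hB_mem (i := ⟨n, by omega⟩) (j := ⟨n + 1, hn⟩) rfl).mp hB
  have hstepA : ∀ n, n + 2 < p → ¬(A n ∧ A (n + 1)) := by
    rintro n hn ⟨h1, h2⟩
    obtain ⟨i, j, hi, hj, hm1⟩ := h1
    obtain ⟨j', k, hj', hk, hm2⟩ := h2
    have : j' = j := Fin.ext (by omega)
    subst this
    exact no_consec_a hsub (by omega) (by omega) hm1 hm2
  have hstepB : ∀ n, n + 2 < p → ¬(B n ∧ B (n + 1)) := by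
    rintro n hn ⟨h1, h2⟩
    obtain ⟨i, j, hi, hj, hm1⟩ := h1
    obtain ⟨j', k, hj', hk, hm2⟩ := h2
    have : j' = j := Fin.ext (by omega)
    subst this
    exact no_consec_b hsub (by omega) (by omega) hm1 hm2
  have hflip : ∀ n, n + 2 < p → (A (n + 1) ↔ ¬A n) := by
    intro n hn
    constructor
    · intro h2 h1; exact hstepA n hn ⟨h1, h2⟩
    · intro h1
      have hBn : B n := (hor n (by omega)).resolve_left h1
      by_contra h2
      have hBn1 : B (n + 1) := (hor (n + 1) hn).resolve_left h2
      exact hstepB n hn ⟨hBn, hBn1⟩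
  set c : ℕ := if A 0 then 0 else 1 with hc
  have hc2 : c < 2 := by rw [hc]; split_ifs <;> omega
  have hchar : ∀ n, n + 1 < p → (A n ↔ n % 2 = c) := by
    intro n
    induction n with
    | zero =>
      intro h0
      by_cases hA0 : A 0
      · rw [hc, if_pos hA0]; simp [hA0]
      · rw [hc, if_neg hA0]; simp [hA0]
    | succ n ih =>
      intro hn
      have h1 := ih (by omega)
      rw [hflip n hn, h1]
      omega
  have hBchar : ∀ n, n + 1 < p → (B n ↔ ¬(n % 2 = c)) := by
    intro n hn
    constructor
    · intro hB hA
      exact hnand n hn ⟨(hchar n hn).mpr hA, hB⟩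
    · intro h
      have hnA : ¬A n := fun hA => h ((hchar n hn).mp hA)
      exact (hor n hn).resolve_left hnA
  have hTeq : T = Tgen c p := by
    ext e
    constructor
    · intro he
      have hx : e ∈ xorEdges p := by
        have h := hsub.1 he
        rw [xorGadget, edgeSet_fromEdgeSet] at h
        exact h.1
      rcases hx with ⟨i, j, hij, rfl | rfl⟩ | ⟨i, h⟩
      · have hn : (i : ℕ) + 1 < p := by have := j.isLt; omega
        have hA : A (i : ℕ) := ⟨i, j, rfl, by omega, he⟩
        exact Or.inr ⟨i, j, hij, Or.inl ⟨(hchar _ hn).mp hA, rfl⟩⟩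
      · have hn : (i : ℕ) + 1 < p := by have := j.isLt; omega
        have hB : B (i : ℕ) := ⟨i, j, rfl, by omega, he⟩
        have := (hBchar _ hn).mp hB
        exact Or.inr ⟨i, j, hij, Or.inr ⟨by omega, rfl⟩⟩
      · exact Or.inl ⟨i, h⟩
    · rintro (⟨i, rfl | rfl⟩ | ⟨i, j, hij, ⟨hpar, rfl⟩ | ⟨hpar, rfl⟩⟩)
      · exact (rungs_mem hsub i).1
      · exact (rungs_mem hsub i).2
      · have hn : (i : ℕ) + 1 < p := by have := j.isLt; omega
        exact (hA_mem hij).mp ((hchar _ hn).mpr hpar)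
      · have hn : (i : ℕ) + 1 < p := by have := j.isLt; omega
        exact (hB_mem hij).mp ((hBchar _ hn).mpr (by omega))
  by_cases h0 : A 0
  · left; rw [hTeq, hc, if_pos h0]
  · right; rw [hTeq, hc, if_neg h0]


/-- for `p ≥ 2` the XOR gadget of order `p` has exactly the two subtours
`T_a` and `T_b` (and these are distinct); for `p = 1` it has exactly one subtour, namely
the path `(a₁, u₁, b₁)`. -/
theorem stmt_4 (p : ℕ) :
    (2 ≤ p → (Ta p ≠ Tb p ∧
      ∀ T : Set (Sym2 (XV p)), IsXorSubtour p T ↔ (T = Ta p ∨ T = Tb p))) ∧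
    (p = 1 → ∀ T : Set (Sym2 (XV p)), IsXorSubtour p T ↔
      T = {e | ∃ i : Fin p, e = s(av i, uvx i) ∨ e = s(bv i, uvx i)}) := by
  constructor
  · intro hp
    constructor
    · intro h
      have h1 : s(av (⟨0, by omega⟩ : Fin p), av ⟨1, by omega⟩) ∈ Ta p :=
        Or.inr ⟨⟨0, by omega⟩, ⟨1, by omega⟩, rfl, Or.inl ⟨rfl, rfl⟩⟩
      rw [h] at h1
      rcases h1 with ⟨i, he | he⟩ | ⟨i, j, hij, ⟨hpar, he⟩ | ⟨hpar, he⟩⟩ <;>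
        rw [Sym2.eq_iff] at he <;>
        rcases he with ⟨h1, h2⟩ | ⟨h1, h2⟩ <;>
        simp [Fin.ext_iff] at h1 h2 <;>
        omega
    · intro T
      constructor
      · intro hsub
        rcases subtour_eq_tgen hp hsub with h | h
        · exact Or.inl (by rw [h, Tgen_zero])
        · exact Or.inr (by rw [h, Tgen_one])
      · rintro (rfl | rfl)
        · rw [← Tgen_zero]; exact tgen_subtour (by omega) (by omega)
        · rw [← Tgen_one]; exact tgen_subtour (by omega) (by omega)
  · rintro rfl T
    have hR : {e : Sym2 (XV 1) | ∃ i : Fin 1, e = s(av i, uvx i) ∨ e = s(bv i, uvx i)} =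
        Tgen 0 1 := by
      ext e
      constructor
      · rintro ⟨i, h⟩; exact Or.inl ⟨i, h⟩
      · rintro (⟨i, h⟩ | ⟨i, j, hij, -⟩)
        · exact ⟨i, h⟩
        · exact absurd hij (by have := j.isLt; have := i.isLt; omega)
    constructor
    · intro hsub
      ext e
      constructor
      · intro he
        have hx : e ∈ xorEdges 1 := by
          have h := hsub.1 he
          rw [xorGadget, edgeSet_fromEdgeSet] at h
          exact h.1
        rcases hx with ⟨i, j, hij, -⟩ | ⟨i, h⟩
        · exact absurd hij (by have := j.isLt; have := i.isLt; omega)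
        · exact ⟨i, h⟩
      · rintro ⟨i, rfl | rfl⟩
        · exact (rungs_mem hsub i).1
        · exact (rungs_mem hsub i).2
    · intro h
      rw [h, hR]
      exact tgen_subtour (by omega) (by omega)
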